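/- Let p be an odd prime, c ∈ F_p, and k an integer. Then, over F_p, k * T(p-1,k) = T(p-2,k+1) - T(p-2,k-1), where T(n,j) denotes the coefficient of x^j in (x + c + 1/x)^n. -/

import Mathlib

/-- The trinomial coefficient: coefficient of `x^k` in `(x + c + x⁻¹)^n` over `R`. -/
noncomputable def triCoeff (R : Type*) [CommRing R] (c : R) (n : ℕ) (k : ℤ) : R :=
  (AddMonoidAlgebra.coeff ((LaurentPolynomial.T 1 + LaurentPolynomial.C c + LaurentPolynomial.T (-1)) ^ n :
      LaurentPolynomial R) : ℤ →₀ R) k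

open Polynomial LaurentPolynomial in
/-- Coefficient of `toLaurent f` at an integer index. -/
lemma toLaurent_apply_int {R : Type*} [CommRing R] (f : R[X]) (j : ℤ) :
    (AddMonoidAlgebra.coeff (Polynomial.toLaurent f : LaurentPolynomial R) : ℤ →₀ R) j =
      if 0 ≤ j then f.coeff j.toNat else 0 := by
  rw [Polynomial.toLaurent_apply]
  change Finsupp.mapDomain _ (AddMonoidAlgebra.coeff f.toFinsupp) j = _
  split_ifs with h
  · obtain ⟨m, rfl⟩ := Int.eq_ofNat_of_zero_le h
    rw [Finsupp.mapDomain_apply Nat.cast_injective]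
    simp [Polynomial.coeff]
  · rw [Finsupp.mapDomain_notin_range]
    rintro ⟨m, rfl⟩
    exact h (Int.natCast_nonneg m)

open LaurentPolynomial in
lemma mul_T_apply {R : Type*} [CommRing R] (f : LaurentPolynomial R) (n j : ℤ) :
    (AddMonoidAlgebra.coeff (f * T n : LaurentPolynomial R) : ℤ →₀ R) j =
      (AddMonoidAlgebra.coeff f : ℤ →₀ R) (j - n) := by
  have h2 := AddMonoidAlgebra.coeff_mul_single_apply f (1 : R) n j
  rw [mul_one, ← sub_eq_add_neg] at h2
  exact h2

open Polynomial LaurentPolynomial in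
lemma triCoeff_eq {R : Type*} [CommRing R] (c : R) (n : ℕ) (k : ℤ) :
    triCoeff R c n k =
      (AddMonoidAlgebra.coeff (Polynomial.toLaurent ((X ^ 2 + Polynomial.C c * X + 1 : R[X]) ^ n)
        : LaurentPolynomial R) : ℤ →₀ R) (k + n) := by
  have hbase : (LaurentPolynomial.T 1 + LaurentPolynomial.C c + LaurentPolynomial.T (-1)
      : LaurentPolynomial R) =
      Polynomial.toLaurent (X ^ 2 + Polynomial.C c * X + 1 : R[X]) * T (-1) := by
    simp only [map_add, map_mul, map_pow, map_one, Polynomial.toLaurent_X,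
      Polynomial.toLaurent_C, T_pow, mul_one]
    rw [add_mul, add_mul, mul_T_assoc, one_mul]
    rw [← T_add]
    norm_num
  have hpow : (LaurentPolynomial.T 1 + LaurentPolynomial.C c + LaurentPolynomial.T (-1)
      : LaurentPolynomial R) ^ n =
      Polynomial.toLaurent ((X ^ 2 + Polynomial.C c * X + 1 : R[X]) ^ n) * T (-(n : ℤ)) := by
    rw [hbase, mul_pow, T_pow, map_pow]
    norm_num
  rw [triCoeff, hpow, mul_T_apply]
  ring_nf

open Polynomial LaurentPolynomial in
theorem tri_deriv_identity (p : ℕ) [Fact p.Prime] (hp : p ≠ 2) (c : ZMod p) (k : ℤ) :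
    (k : ZMod p) * triCoeff (ZMod p) c (p - 1) k =
      triCoeff (ZMod p) c (p - 2) (k + 1) - triCoeff (ZMod p) c (p - 2) (k - 1) := by
  have hp3 : 3 ≤ p := by
    have := (Fact.out : p.Prime).two_le
    omega
  set q : (ZMod p)[X] := X ^ 2 + Polynomial.C c * X + 1 with hq
  set g : (ZMod p)[X] := q ^ (p - 1) with hg
  set h : (ZMod p)[X] := q ^ (p - 2) with hh
  have hgh : g = q * h := by
    rw [hg, hh, ← pow_succ']
    congr 1
    omega
  have hderq : derivative q = 2 * X + Polynomial.C c := by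
    rw [hq]
    simp only [derivative_add, derivative_one, derivative_X_pow, derivative_C_mul, derivative_X,
      derivative_mul, derivative_C, add_zero, mul_one, zero_mul, zero_add]
    norm_num [Polynomial.C_eq_natCast]
    exact map_ofNat Polynomial.C 2
  have hpm1 : ((p - 1 : ℕ) : ZMod p) = -1 := by
    have h1 : ((p - 1 : ℕ) : ZMod p) = (p : ZMod p) - 1 := by
      have : (p - 1) + 1 = p := by omega
      have h2 : (((p - 1) + 1 : ℕ) : ZMod p) = (p : ZMod p) := by rw [this]
      push_cast at h2
      linear_combination h2
    rw [h1, ZMod.natCast_self]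
    ring
  have hderg : derivative g = -(h * (2 * X + Polynomial.C c)) := by
    rw [hg, derivative_pow, hderq, hpm1]
    rw [show p - 1 - 1 = p - 2 from by omega, ← hh]
    rw [map_neg, map_one]
    ring
  have hkey : derivative (X * g) = h - X ^ 2 * h := by
    rw [derivative_mul, derivative_X, one_mul, hderg, hgh, hq]
    ring
  have e1 : ((p - 1 : ℕ) : ℤ) = (p : ℤ) - 1 := by omega
  have e2 : ((p - 2 : ℕ) : ℤ) = (p : ℤ) - 2 := by omega
  rw [triCoeff_eq, triCoeff_eq, triCoeff_eq, ← hq, ← hg, ← hh, e1, e2]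
  rw [show k + 1 + ((p : ℤ) - 2) = k + ((p : ℤ) - 1) from by ring,
    show k - 1 + ((p : ℤ) - 2) = k + ((p : ℤ) - 1) - 2 from by ring]
  set j : ℤ := k + ((p : ℤ) - 1) with hj
  by_cases hjpos : 0 ≤ j
  · set m : ℕ := j.toNat with hm
    rw [toLaurent_apply_int, toLaurent_apply_int, toLaurent_apply_int, if_pos hjpos,
      if_pos hjpos]
    have hX2 : (((X : (ZMod p)[X]) ^ 2 * h).coeff m : ZMod p) =
        if 0 ≤ j - 2 then h.coeff (j - 2).toNat else 0 := by
      rw [coeff_X_pow_mul']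
      split_ifs with h1 h2 h2
      · congr 1
        omega
      · omega
      · omega
      · rfl
    rw [← hX2, ← hm]
    have hco := congrArg (fun f => Polynomial.coeff f m) hkey
    simp only [coeff_derivative, coeff_sub, coeff_X_mul] at hco
    have hk : (k : ZMod p) = ((m : ℕ) + 1 : ZMod p) := by
      have hkk : k = (m : ℤ) + 1 - (p : ℤ) := by omega
      rw [hkk]
      push_cast
      rw [ZMod.natCast_self]
      ring
    rw [hk, mul_comm]
    convert hco using 2
  · rw [toLaurent_apply_int, toLaurent_apply_int, toLaurent_apply_int, if_neg hjpos,
      if_neg hjpos, if_neg (by omega)]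
    ring
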